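/- arXiv:2505.02607 — 4 statements merged into one kernel-verified Lean document; each statement's English description precedes it below -/
import Mathlib

section
/- Strict monotonicity of expectiles: if X ≤ Y almost surely, X, Y ∈ L², and P(X < Y) > 0, then e_γ(X) < e_γ(Y) for every γ ∈ (0,1). -/
open MeasureTheory ProbabilityTheory Real Set

/-- Asymmetric squared-loss objective whose minimizer is the `γ`-expectile. -/
noncomputable def phi {Ω : Type*} [MeasurableSpace Ω] (μ : Measure Ω) (γ : ℝ)
    (X : Ω → ℝ) (y : ℝ) : ℝ :=
  γ * ∫ ω, (max (X ω - y) 0) ^ 2 ∂μ + (1 - γ) * ∫ ω, (max (y - X ω) 0) ^ 2 ∂μ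

/-- `e` is the γ-expectile of `X` under `μ`: the unique minimizer of `phi`. -/
def IsExpectile {Ω : Type*} [MeasurableSpace Ω] (μ : Measure Ω) (γ : ℝ)
    (X : Ω → ℝ) (e : ℝ) : Prop :=
  (∀ y, phi μ γ X e ≤ phi μ γ X y) ∧ ∀ y, (∀ z, phi μ γ X y ≤ phi μ γ X z) → y = e


lemma ptwise_taylor (γ a t : ℝ) (h0 : 0 ≤ γ) (h1 : γ ≤ 1) :
    γ * max (a - t) 0 ^ 2 + (1 - γ) * max (t - a) 0 ^ 2 ≤
      γ * max a 0 ^ 2 + (1 - γ) * max (-a) 0 ^ 2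
        + t * (2 * (1 - γ) * max (-a) 0 - 2 * γ * max a 0) + t ^ 2 := by
  rcases le_total a 0 with ha | ha <;> rcases le_total (a - t) 0 with hat | hat
  · rw [max_eq_right ha, max_eq_left (neg_nonneg.2 ha), max_eq_right hat,
      max_eq_left (by linarith : (0:ℝ) ≤ t - a)]
    nlinarith [sq_nonneg t, sq_nonneg (t - a)]
  · rw [max_eq_right ha, max_eq_left (neg_nonneg.2 ha), max_eq_left hat,
      max_eq_right (by linarith : t - a ≤ 0)]
    have h2 : (a - t) ^ 2 ≤ t ^ 2 := by
      nlinarith [mul_nonneg (neg_nonneg.2 ha) (by linarith : 0 ≤ a - 2 * t)]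
    nlinarith [mul_nonneg h0 (sub_nonneg.2 h2), mul_nonneg (sub_nonneg.2 h1) (sq_nonneg (a - t))]
  · rw [max_eq_left ha, max_eq_right (neg_nonpos.2 ha), max_eq_right hat,
      max_eq_left (by linarith : (0:ℝ) ≤ t - a)]
    have h2 : (t - a) ^ 2 ≤ t ^ 2 := by
      nlinarith [mul_nonneg ha (by linarith : 0 ≤ 2 * t - a)]
    nlinarith [mul_nonneg h0 (sq_nonneg (t - a)), mul_nonneg (sub_nonneg.2 h1) (sub_nonneg.2 h2)]
  · rw [max_eq_left ha, max_eq_right (neg_nonpos.2 ha), max_eq_left hat,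
      max_eq_right (by linarith : t - a ≤ 0)]
    nlinarith [sq_nonneg t]

section aux
variable {Ω : Type*} [MeasurableSpace Ω] {μ : Measure Ω} [IsProbabilityMeasure μ] {X : Ω → ℝ}

lemma int_p (hX : MemLp X 2 μ) (c : ℝ) :
    Integrable (fun ω => max (X ω - c) 0) μ :=
  ((hX.sub (memLp_const c)).pos_part).integrable one_le_two

lemma int_q (hX : MemLp X 2 μ) (c : ℝ) :
    Integrable (fun ω => max (c - X ω) 0) μ :=
  (((memLp_const c).sub hX).pos_part).integrable one_le_two

lemma int_psq (hX : MemLp X 2 μ) (c : ℝ) :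
    Integrable (fun ω => max (X ω - c) 0 ^ 2) μ :=
  ((hX.sub (memLp_const c)).pos_part).integrable_sq

lemma int_qsq (hX : MemLp X 2 μ) (c : ℝ) :
    Integrable (fun ω => max (c - X ω) 0 ^ 2) μ :=
  (((memLp_const c).sub hX).pos_part).integrable_sq

lemma foc (hX : MemLp X 2 μ) {γ : ℝ} (hγ : γ ∈ Set.Ioo (0:ℝ) 1)
    (e : ℝ) (hmin : ∀ y, phi μ γ X e ≤ phi μ γ X y) :
    γ * ∫ ω, max (X ω - e) 0 ∂μ = (1 - γ) * ∫ ω, max (e - X ω) 0 ∂μ := by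
  obtain ⟨hγ0, hγ1⟩ := hγ
  set P : ℝ := ∫ ω, max (X ω - e) 0 ∂μ with hP
  set Q : ℝ := ∫ ω, max (e - X ω) 0 ∂μ with hQ
  set I : ℝ := 2 * (1 - γ) * Q - 2 * γ * P with hI
  have key : ∀ t : ℝ, 0 ≤ t * I + t ^ 2 := by
    intro t
    have Ia : Integrable (fun ω => γ * max (X ω - e) 0 ^ 2) μ := (int_psq hX e).const_mul γ
    have Ib : Integrable (fun ω => (1 - γ) * max (e - X ω) 0 ^ 2) μ :=
      (int_qsq hX e).const_mul (1 - γ)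
    have Ic : Integrable
        (fun ω => t * (2 * (1 - γ) * max (e - X ω) 0 - 2 * γ * max (X ω - e) 0)) μ :=
      (((int_q hX e).const_mul (2 * (1 - γ))).sub ((int_p hX e).const_mul (2 * γ))).const_mul t
    have Iab : Integrable (fun ω => γ * max (X ω - e) 0 ^ 2
        + (1 - γ) * max (e - X ω) 0 ^ 2) μ := Ia.add Ib
    have Iabc : Integrable (fun ω => γ * max (X ω - e) 0 ^ 2 + (1 - γ) * max (e - X ω) 0 ^ 2
        + t * (2 * (1 - γ) * max (e - X ω) 0 - 2 * γ * max (X ω - e) 0)) μ := Iab.add Ic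
    have hle : phi μ γ X (e + t) ≤
        ∫ ω, (γ * max (X ω - e) 0 ^ 2 + (1 - γ) * max (e - X ω) 0 ^ 2
          + t * (2 * (1 - γ) * max (e - X ω) 0 - 2 * γ * max (X ω - e) 0) + t ^ 2) ∂μ := by
      rw [phi, ← integral_const_mul, ← integral_const_mul,
        ← integral_add ((int_psq hX (e + t)).const_mul γ) ((int_qsq hX (e + t)).const_mul (1 - γ))]
      refine integral_mono
        (((int_psq hX (e + t)).const_mul γ).add ((int_qsq hX (e + t)).const_mul (1 - γ)))
        (Iabc.add (integrable_const _)) ?_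
      intro ω
      have h := ptwise_taylor γ (X ω - e) t hγ0.le hγ1.le
      have e1 : X ω - (e + t) = X ω - e - t := by ring
      have e2 : e + t - X ω = t - (X ω - e) := by ring
      have e3 : e - X ω = -(X ω - e) := by ring
      simp only [e1, e2, e3]
      linarith [h]
    have heval : ∫ ω, (γ * max (X ω - e) 0 ^ 2 + (1 - γ) * max (e - X ω) 0 ^ 2
          + t * (2 * (1 - γ) * max (e - X ω) 0 - 2 * γ * max (X ω - e) 0) + t ^ 2) ∂μ
        = phi μ γ X e + (t * I + t ^ 2) := by
      rw [integral_add Iabc (integrable_const _), integral_add Iab Ic,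
        integral_add Ia Ib, integral_const_mul, integral_const_mul, integral_const_mul,
        integral_sub ((int_q hX e).const_mul (2 * (1 - γ))) ((int_p hX e).const_mul (2 * γ)),
        integral_const_mul, integral_const_mul, integral_const]
      simp only [measure_univ, probReal_univ, ENNReal.toReal_one, one_smul, smul_eq_mul, one_mul]
      rw [phi, hI, hP, hQ]
      ring
    have := hmin (e + t)
    rw [heval] at hle
    linarith
  have hI0 : I = 0 := by
    have h1' := key (-(I / 2))
    nlinarith [sq_nonneg I]
  rw [hI] at hI0
  linarith

end aux

theorem expectile_strict_monotone
    {Ω : Type*} [MeasurableSpace Ω] (μ : Measure Ω) [IsProbabilityMeasure μ]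
    (X Y : Ω → ℝ) (hX : MemLp X 2 μ) (hY : MemLp Y 2 μ)
    (hXY : ∀ᵐ ω ∂μ, X ω ≤ Y ω) (hlt : 0 < μ {ω | X ω < Y ω})
    (γ : ℝ) (hγ : γ ∈ Set.Ioo (0:ℝ) 1)
    (eX eY : ℝ) (heX : IsExpectile μ γ X eX) (heY : IsExpectile μ γ Y eY) :
    eX < eY := by
  obtain ⟨hγ0, hγ1⟩ := hγ
  have focX := foc hX ⟨hγ0, hγ1⟩ eX heX.1
  have focY := foc hY ⟨hγ0, hγ1⟩ eY heY.1
  by_contra hcon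
  push_neg at hcon
  -- hcon : eY ≤ eX
  -- antitonicity at eX versus eY for Y
  have mono1 : ∫ ω, max (Y ω - eX) 0 ∂μ ≤ ∫ ω, max (Y ω - eY) 0 ∂μ :=
    integral_mono (int_p hY eX) (int_p hY eY) fun ω => max_le_max (by linarith) le_rfl
  have mono2 : ∫ ω, max (eY - Y ω) 0 ∂μ ≤ ∫ ω, max (eX - Y ω) 0 ∂μ :=
    integral_mono (int_q hY eY) (int_q hY eX) fun ω => max_le_max (by linarith) le_rfl
  have hanti : γ * ∫ ω, max (Y ω - eX) 0 ∂μ - (1 - γ) * ∫ ω, max (eX - Y ω) 0 ∂μ ≤ 0 := by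
    nlinarith [mul_le_mul_of_nonneg_left mono1 hγ0.le,
      mul_le_mul_of_nonneg_left mono2 (by linarith : (0:ℝ) ≤ 1 - γ)]
  -- strict positivity at eX for Y
  set m : ℝ := min γ (1 - γ) with hm
  have hm0 : 0 < m := lt_min hγ0 (by linarith)
  have hptw : ∀ᵐ ω ∂μ, m * (Y ω - X ω) ≤
      γ * (max (Y ω - eX) 0 - max (X ω - eX) 0)
        + (1 - γ) * (max (eX - X ω) 0 - max (eX - Y ω) 0) := by
    filter_upwards [hXY] with ω hω
    have hA : max (X ω - eX) 0 ≤ max (Y ω - eX) 0 := max_le_max (by linarith) le_rfl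
    have hB : max (eX - Y ω) 0 ≤ max (eX - X ω) 0 := max_le_max (by linarith) le_rfl
    have l1 : max (Y ω - eX) 0 - max (eX - Y ω) 0 = Y ω - eX := by
      rcases le_total (Y ω - eX) 0 with h | h
      · rw [max_eq_right h, max_eq_left (by linarith : (0:ℝ) ≤ eX - Y ω)]; ring
      · rw [max_eq_left h, max_eq_right (by linarith : eX - Y ω ≤ 0)]; ring
    have l2 : max (X ω - eX) 0 - max (eX - X ω) 0 = X ω - eX := by
      rcases le_total (X ω - eX) 0 with h | h
      · rw [max_eq_right h, max_eq_left (by linarith : (0:ℝ) ≤ eX - X ω)]; ring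
      · rw [max_eq_left h, max_eq_right (by linarith : eX - X ω ≤ 0)]; ring
    have hmγ : m ≤ γ := min_le_left _ _
    have hmγ' : m ≤ 1 - γ := min_le_right _ _
    nlinarith [mul_nonneg (sub_nonneg.2 hmγ) (sub_nonneg.2 hA),
      mul_nonneg (sub_nonneg.2 hmγ') (sub_nonneg.2 hB)]
  have hint : Integrable (fun ω => Y ω - X ω) μ :=
    (hY.integrable one_le_two).sub (hX.integrable one_le_two)
  have hpos : 0 < ∫ ω, (Y ω - X ω) ∂μ := by
    rw [integral_pos_iff_support_of_nonneg_ae (hXY.mono fun ω h => sub_nonneg.2 h) hint]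
    refine lt_of_lt_of_le hlt (measure_mono ?_)
    intro ω hω
    simp only [Function.mem_support]
    exact sub_ne_zero_of_ne (ne_of_gt hω)
  have I1 : Integrable (fun ω => max (Y ω - eX) 0 - max (X ω - eX) 0) μ :=
    (int_p hY eX).sub (int_p hX eX)
  have I2 : Integrable (fun ω => max (eX - X ω) 0 - max (eX - Y ω) 0) μ :=
    (int_q hX eX).sub (int_q hY eX)
  have Irhs : Integrable (fun ω => γ * (max (Y ω - eX) 0 - max (X ω - eX) 0)
      + (1 - γ) * (max (eX - X ω) 0 - max (eX - Y ω) 0)) μ :=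
    (I1.const_mul γ).add (I2.const_mul (1 - γ))
  have hineq : m * ∫ ω, (Y ω - X ω) ∂μ ≤
      (γ * ∫ ω, max (Y ω - eX) 0 ∂μ - (1 - γ) * ∫ ω, max (eX - Y ω) 0 ∂μ)
        - (γ * ∫ ω, max (X ω - eX) 0 ∂μ - (1 - γ) * ∫ ω, max (eX - X ω) 0 ∂μ) := by
    have h1 : m * ∫ ω, (Y ω - X ω) ∂μ = ∫ ω, m * (Y ω - X ω) ∂μ :=
      (integral_const_mul m _).symm
    rw [h1]
    calc ∫ ω, m * (Y ω - X ω) ∂μ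
        ≤ ∫ ω, (γ * (max (Y ω - eX) 0 - max (X ω - eX) 0)
            + (1 - γ) * (max (eX - X ω) 0 - max (eX - Y ω) 0)) ∂μ :=
          integral_mono_ae (hint.const_mul m) Irhs hptw
      _ = _ := by
          rw [integral_add (I1.const_mul γ) (I2.const_mul (1 - γ)),
            integral_const_mul, integral_const_mul,
            integral_sub (int_p hY eX) (int_p hX eX),
            integral_sub (int_q hX eX) (int_q hY eX)]
          ring
  nlinarith [mul_pos hm0 hpos]
end

section
/- Expectiles are strictly increasing in their level: for X ∈ L² non-degenerate (not almost surely constant) and 0 < γ₁ < γ₂ < 1, one has e_{γ₁}(X) < e_{γ₂}(X). -/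
open MeasureTheory ProbabilityTheory Real Set

namespace ExpectileAux

variable {Ω : Type*} [MeasurableSpace Ω] {μ : Measure Ω} [IsProbabilityMeasure μ]
  {X : Ω → ℝ}

lemma memLp_pos (hX : MemLp X 2 μ) (y : ℝ) :
    MemLp (fun ω => max (X ω - y) 0) 2 μ :=
  (hX.sub (memLp_const y)).pos_part

lemma memLp_neg (hX : MemLp X 2 μ) (y : ℝ) :
    MemLp (fun ω => max (y - X ω) 0) 2 μ := by
  have := ((memLp_const (μ := μ) y).sub hX).pos_part
  simpa using this

lemma int_pos_sq (hX : MemLp X 2 μ) (y : ℝ) :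
    Integrable (fun ω => (max (X ω - y) 0) ^ 2) μ :=
  (memLp_pos hX y).integrable_sq

lemma int_neg_sq (hX : MemLp X 2 μ) (y : ℝ) :
    Integrable (fun ω => (max (y - X ω) 0) ^ 2) μ :=
  (memLp_neg hX y).integrable_sq

lemma int_pos (hX : MemLp X 2 μ) (y : ℝ) :
    Integrable (fun ω => max (X ω - y) 0) μ :=
  (memLp_pos hX y).integrable one_le_two

lemma int_neg (hX : MemLp X 2 μ) (y : ℝ) :
    Integrable (fun ω => max (y - X ω) 0) μ :=
  (memLp_neg hX y).integrable one_le_two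

lemma key1 (a t : ℝ) (ht : 0 ≤ t) :
    (max (a - t) 0) ^ 2 - (max a 0) ^ 2 ≤ -2 * t * max a 0 + t ^ 2 := by
  rcases le_total a 0 with h | h
  · rw [max_eq_right h, max_eq_right (by linarith)]
    nlinarith
  · rw [max_eq_left h]
    rcases le_total a t with h' | h'
    · rw [max_eq_right (by linarith)]
      nlinarith
    · rw [max_eq_left (by linarith)]
      nlinarith

lemma key2 (b t : ℝ) (ht : 0 ≤ t) :
    (max (b + t) 0) ^ 2 - (max b 0) ^ 2 ≤ 2 * t * max b 0 + t ^ 2 := by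
  rcases le_total b 0 with h | h
  · rw [max_eq_right h]
    rcases le_total (b + t) 0 with h' | h'
    · rw [max_eq_right h']; nlinarith
    · rw [max_eq_left h']; nlinarith
  · rw [max_eq_left h, max_eq_left (by linarith)]
    nlinarith

/-- One-sided first-order condition from minimality, perturbing upwards. -/
lemma foc_le (hX : MemLp X 2 μ) {γ : ℝ} (hγ : γ ∈ Set.Ioo (0:ℝ) 1) {e : ℝ}
    (hmin : ∀ y, phi μ γ X e ≤ phi μ γ X y) :
    γ * ∫ ω, max (X ω - e) 0 ∂μ ≤ (1 - γ) * ∫ ω, max (e - X ω) 0 ∂μ := by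
  set P := ∫ ω, max (X ω - e) 0 ∂μ with hP
  set N := ∫ ω, max (e - X ω) 0 ∂μ with hN
  set c := (1 - γ) * N - γ * P with hc
  have hkey : ∀ t : ℝ, 0 < t → 0 ≤ 2 * t * c + t ^ 2 := by
    intro t ht
    have hmin' := hmin (e + t)
    -- phi μ γ X (e+t) - phi μ γ X e ≤ 2 t c + t^2
    have hA : (∫ ω, (max (X ω - (e + t)) 0) ^ 2 ∂μ) - ∫ ω, (max (X ω - e) 0) ^ 2 ∂μ
        ≤ -2 * t * P + t ^ 2 := by
      rw [← integral_sub (int_pos_sq hX (e + t)) (int_pos_sq hX e)]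
      have : -2 * t * P + t ^ 2
          = ∫ ω, (-2 * t * max (X ω - e) 0 + t ^ 2) ∂μ := by
        rw [integral_add ((int_pos hX e).const_mul _) (integrable_const _),
          integral_const_mul, integral_const]
        simp [hP]
      rw [this]
      refine integral_mono (((int_pos_sq hX (e + t))).sub (int_pos_sq hX e))
        (((int_pos hX e).const_mul _).add (integrable_const _)) ?_
      intro ω
      have := key1 (X ω - e) t ht.le
      simpa [sub_sub, show X ω - e - t = X ω - (e + t) by ring] using this
    have hB : (∫ ω, (max ((e + t) - X ω) 0) ^ 2 ∂μ) - ∫ ω, (max (e - X ω) 0) ^ 2 ∂μ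
        ≤ 2 * t * N + t ^ 2 := by
      rw [← integral_sub (int_neg_sq hX (e + t)) (int_neg_sq hX e)]
      have : 2 * t * N + t ^ 2
          = ∫ ω, (2 * t * max (e - X ω) 0 + t ^ 2) ∂μ := by
        rw [integral_add ((int_neg hX e).const_mul _) (integrable_const _),
          integral_const_mul, integral_const]
        simp [hN]
      rw [this]
      refine integral_mono (((int_neg_sq hX (e + t))).sub (int_neg_sq hX e))
        (((int_neg hX e).const_mul _).add (integrable_const _)) ?_
      intro ω
      have := key2 (e - X ω) t ht.le
      simpa [show e - X ω + t = e + t - X ω by ring] using this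
    have hphi : phi μ γ X (e + t) - phi μ γ X e ≤ 2 * t * c + t ^ 2 := by
      unfold phi
      have hγ0 : (0:ℝ) < γ := hγ.1
      have hγ1 : γ < 1 := hγ.2
      nlinarith [hA, hB]
    linarith
  by_contra hcon
  push_neg at hcon
  have hcpos : c < 0 := by simp only [hc]; linarith
  have := hkey (-c) (by linarith)
  nlinarith

lemma phi_reflect (μ : Measure Ω) (γ : ℝ) (X : Ω → ℝ) (y : ℝ) :
    phi μ (1 - γ) (fun ω => -X ω) (-y) = phi μ γ X y := by
  unfold phi
  have h1 : (fun ω => (max (-X ω - -y) 0) ^ 2) = fun ω => (max (y - X ω) 0) ^ 2 := by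
    funext ω; ring_nf
  have h2 : (fun ω => (max (-y - -X ω) 0) ^ 2) = fun ω => (max (X ω - y) 0) ^ 2 := by
    funext ω; ring_nf
  rw [show (∫ ω, (max (-X ω - -y) 0) ^ 2 ∂μ) = ∫ ω, (max (y - X ω) 0) ^ 2 ∂μ by rw [h1],
    show (∫ ω, (max (-y - -X ω) 0) ^ 2 ∂μ) = ∫ ω, (max (X ω - y) 0) ^ 2 ∂μ by rw [h2]]
  ring

/-- Full first-order condition for a minimizer of `phi`. -/
lemma foc (hX : MemLp X 2 μ) {γ : ℝ} (hγ : γ ∈ Set.Ioo (0:ℝ) 1) {e : ℝ}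
    (hmin : ∀ y, phi μ γ X e ≤ phi μ γ X y) :
    γ * ∫ ω, max (X ω - e) 0 ∂μ = (1 - γ) * ∫ ω, max (e - X ω) 0 ∂μ := by
  have h1 := foc_le hX hγ hmin
  have hmin' : ∀ y, phi μ (1 - γ) (fun ω => -X ω) (-e) ≤ phi μ (1 - γ) (fun ω => -X ω) y := by
    intro y
    rw [phi_reflect, show y = -(-y) by ring, phi_reflect]
    exact hmin (-y)
  have h2 := foc_le hX.neg (by constructor <;> [linarith [hγ.2]; linarith [hγ.1]]) hmin'
  simp only [show (1 : ℝ) - (1 - γ) = γ by ring, Pi.neg_apply,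
    show ∀ x : ℝ, -x - -e = e - x from fun x => by ring,
    show ∀ x : ℝ, -e - -x = x - e from fun x => by ring] at h2
  linarith

end ExpectileAux

open ExpectileAux in
theorem expectile_strictMono_in_level
    {Ω : Type*} [MeasurableSpace Ω] (μ : Measure Ω) [IsProbabilityMeasure μ]
    (X : Ω → ℝ) (hX : MemLp X 2 μ)
    (hnd : ¬ ∃ c : ℝ, ∀ᵐ ω ∂μ, X ω = c)
    (γ₁ γ₂ : ℝ) (hγ₁ : γ₁ ∈ Set.Ioo (0:ℝ) 1) (hγ₂ : γ₂ ∈ Set.Ioo (0:ℝ) 1)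
    (h12 : γ₁ < γ₂)
    (e₁ e₂ : ℝ) (he₁ : IsExpectile μ γ₁ X e₁) (he₂ : IsExpectile μ γ₂ X e₂) :
    e₁ < e₂ := by
  set P₁ := ∫ ω, max (X ω - e₁) 0 ∂μ with hP₁
  set N₁ := ∫ ω, max (e₁ - X ω) 0 ∂μ with hN₁
  set P₂ := ∫ ω, max (X ω - e₂) 0 ∂μ with hP₂
  set N₂ := ∫ ω, max (e₂ - X ω) 0 ∂μ with hN₂
  have foc₁ : γ₁ * P₁ = (1 - γ₁) * N₁ := foc hX hγ₁ he₁.1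
  have foc₂ : γ₂ * P₂ = (1 - γ₂) * N₂ := foc hX hγ₂ he₂.1
  -- nonnegativity
  have hP₁0 : 0 ≤ P₁ := integral_nonneg fun ω => le_max_right _ _
  have hN₁0 : 0 ≤ N₁ := integral_nonneg fun ω => le_max_right _ _
  have hP₂0 : 0 ≤ P₂ := integral_nonneg fun ω => le_max_right _ _
  have hN₂0 : 0 ≤ N₂ := integral_nonneg fun ω => le_max_right _ _
  -- non-degeneracy: P₁ + N₁ > 0, P₂ + N₂ > 0
  have habs : ∀ e : ℝ, 0 < (∫ ω, max (X ω - e) 0 ∂μ) + ∫ ω, max (e - X ω) 0 ∂μ := by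
    intro e
    have hint : Integrable (fun ω => max (X ω - e) 0 + max (e - X ω) 0) μ :=
      (int_pos hX e).add (int_neg hX e)
    rw [← integral_add (int_pos hX e) (int_neg hX e)]
    rcases lt_or_eq_of_le (integral_nonneg (fun ω =>
        add_nonneg (le_max_right _ _) (le_max_right _ _)) :
        (0:ℝ) ≤ ∫ ω, (max (X ω - e) 0 + max (e - X ω) 0) ∂μ) with h | h
    · exact h
    · exfalso
      apply hnd
      refine ⟨e, ?_⟩
      have := (integral_eq_zero_iff_of_nonneg (fun ω =>
        add_nonneg (le_max_right _ _) (le_max_right _ _)) hint).1 h.symm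
      filter_upwards [this] with ω hω
      simp only [Pi.zero_apply] at hω
      have h1 : max (X ω - e) 0 = 0 ∧ max (e - X ω) 0 = 0 := by
        constructor <;> nlinarith [le_max_right (X ω - e) (0:ℝ), le_max_right (e - X ω) (0:ℝ),
          le_max_left (X ω - e) (0:ℝ), le_max_left (e - X ω) (0:ℝ)]
      have := h1.1
      have := h1.2
      have hx1 : X ω - e ≤ 0 := by nlinarith [le_max_left (X ω - e) (0:ℝ), h1.1]
      have hx2 : e - X ω ≤ 0 := by nlinarith [le_max_left (e - X ω) (0:ℝ), h1.2]
      linarith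
  have hs₁ : 0 < P₁ + N₁ := habs e₁
  have hs₂ : 0 < P₂ + N₂ := habs e₂
  -- strict positivity of each piece
  have hγ₁0 := hγ₁.1; have hγ₁1 := hγ₁.2
  have hγ₂0 := hγ₂.1; have hγ₂1 := hγ₂.2
  have hP₁pos : 0 < P₁ := by
    rcases lt_or_eq_of_le hP₁0 with h | h; · exact h
    · exfalso; rw [← h] at foc₁; nlinarith
  have hN₁pos : 0 < N₁ := by nlinarith
  have hP₂pos : 0 < P₂ := by
    rcases lt_or_eq_of_le hP₂0 with h | h; · exact h
    · exfalso; rw [← h] at foc₂; nlinarith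
  have hN₂pos : 0 < N₂ := by nlinarith
  -- monotonicity: if e₂ ≤ e₁ then P₁ ≤ P₂ and N₂ ≤ N₁
  by_contra hcon
  push_neg at hcon
  have hPmono : P₁ ≤ P₂ := by
    refine integral_mono (int_pos hX e₁) (int_pos hX e₂) fun ω => ?_
    exact max_le_max (by linarith) le_rfl
  have hNmono : N₂ ≤ N₁ := by
    refine integral_mono (int_neg hX e₂) (int_neg hX e₁) fun ω => ?_
    exact max_le_max (by linarith) le_rfl
  -- γᵢ = Nᵢ/(Pᵢ+Nᵢ), γ₁ < γ₂ gives N₁ P₂ < N₂ P₁ ≤ N₁ P₂, contradiction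
  nlinarith [mul_pos hP₁pos hN₂pos, mul_pos hP₂pos hN₁pos,
    mul_le_mul_of_nonneg_left hPmono hN₂0, mul_le_mul_of_nonneg_left hNmono hP₁0,
    mul_pos hs₁ hs₂]
end

section
/- Subadditivity of expectiles for γ ≥ 1/2: for X, Y ∈ L² and γ ∈ [1/2, 1), one has e_γ(X + Y) ≤ e_γ(X) + e_γ(Y); for γ ∈ (0, 1/2] the reverse inequality e_γ(X + Y) ≥ e_γ(X) + e_γ(Y) holds. -/
open MeasureTheory ProbabilityTheory Real Set

noncomputable def ddE (γ u : ℝ) : ℝ := 2*γ*max u 0 - 2*(1-γ)*max (-u) 0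

lemma ddE_eq (γ u : ℝ) : ddE γ u = 2*γ*u + (4*γ-2)*max (-u) 0 := by
  rcases le_total u 0 with h | h
  · rw [ddE, max_eq_right h, max_eq_left (by linarith)]; ring
  · rw [ddE, max_eq_left h, max_eq_right (by linarith)]; ring

lemma ddE_taylor {γ : ℝ} (t u : ℝ) (h0 : 0 ≤ γ) (h1 : γ ≤ 1) :
    |(γ*(max (u-t) 0)^2 + (1-γ)*(max (t-u) 0)^2)
      - (γ*(max u 0)^2 + (1-γ)*(max (-u) 0)^2) + t * ddE γ u| ≤ t^2 := by
  rw [ddE, abs_le]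
  rcases le_total u 0 with hu | hu <;> rcases le_total (u - t) 0 with hut | hut
  · rw [max_eq_right hu, max_eq_left (by linarith : (0:ℝ) ≤ -u),
      max_eq_right hut, max_eq_left (by linarith : (0:ℝ) ≤ t - u)]
    constructor <;> nlinarith [sq_nonneg t, sq_nonneg (t-u), sq_nonneg u, sq_nonneg (t+u)]
  · rw [max_eq_right hu, max_eq_left (by linarith : (0:ℝ) ≤ -u),
      max_eq_left (by linarith : (0:ℝ) ≤ u - t), max_eq_right (by linarith : t - u ≤ 0)]
    have hp : (u-t)^2 ≤ t^2 := by nlinarith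
    constructor <;> nlinarith [mul_nonneg h0 (sub_nonneg.2 hp),
      mul_nonneg (by linarith : (0:ℝ) ≤ 1-γ) (sub_nonneg.2 hp), sq_nonneg t,
      mul_nonneg h0 (sq_nonneg t), mul_nonneg (by linarith : (0:ℝ) ≤ 1-γ) (sq_nonneg t)]
  · rw [max_eq_left hu, max_eq_right (by linarith : -u ≤ (0:ℝ)),
      max_eq_right hut, max_eq_left (by linarith : (0:ℝ) ≤ t - u)]
    have hp : (t-u)^2 ≤ t^2 := by nlinarith
    constructor <;> nlinarith [mul_nonneg h0 (sub_nonneg.2 hp),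
      mul_nonneg (by linarith : (0:ℝ) ≤ 1-γ) (sub_nonneg.2 hp), sq_nonneg t,
      mul_nonneg h0 (sq_nonneg t), mul_nonneg (by linarith : (0:ℝ) ≤ 1-γ) (sq_nonneg t)]
  · rw [max_eq_left hu, max_eq_right (by linarith : -u ≤ (0:ℝ)),
      max_eq_left (by linarith : (0:ℝ) ≤ u - t), max_eq_right (by linarith : t - u ≤ 0)]
    constructor <;> nlinarith [sq_nonneg t, sq_nonneg (t-u), sq_nonneg u, sq_nonneg (t+u)]

lemma ddE_anti {γ : ℝ} (hγ0 : 0 < γ) (hγ1 : γ < 1) {s : ℝ} (hs : 0 ≤ s) (u : ℝ) :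
    ddE γ (u - s) + 2 * min γ (1-γ) * s ≤ ddE γ u := by
  have h1 : min γ (1-γ) ≤ γ := min_le_left _ _
  have h2 : min γ (1-γ) ≤ 1 - γ := min_le_right _ _
  rw [ddE, ddE]
  rcases le_total u 0 with hu | hu <;> rcases le_total (u - s) 0 with hus | hus
  · rw [max_eq_right hu, max_eq_left (by linarith : (0:ℝ) ≤ -u),
      max_eq_right hus, max_eq_left (by linarith : (0:ℝ) ≤ -(u-s))]
    nlinarith [mul_nonneg (sub_nonneg.2 h1) hs, mul_nonneg (sub_nonneg.2 h2) hs,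
      mul_nonneg (sub_nonneg.2 h2) (neg_nonneg.2 hu)]
  · rw [max_eq_right hu, max_eq_left (by linarith : (0:ℝ) ≤ -u),
      max_eq_left (by linarith : (0:ℝ) ≤ u - s), max_eq_right (by linarith : -(u-s) ≤ (0:ℝ))]
    nlinarith [mul_nonneg (sub_nonneg.2 h1) hs, mul_nonneg (sub_nonneg.2 h2) hs,
      mul_nonneg (sub_nonneg.2 h1) hus, mul_nonneg (sub_nonneg.2 h2) (neg_nonneg.2 hu)]
  · rw [max_eq_left hu, max_eq_right (by linarith : -u ≤ (0:ℝ)),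
      max_eq_right hus, max_eq_left (by linarith : (0:ℝ) ≤ -(u-s))]
    nlinarith [mul_nonneg (sub_nonneg.2 h1) hs, mul_nonneg (sub_nonneg.2 h2) hs,
      mul_nonneg (sub_nonneg.2 h1) hu, mul_nonneg (sub_nonneg.2 h2) (neg_nonneg.2 (by linarith : u - s ≤ 0))]
  · rw [max_eq_left hu, max_eq_right (by linarith : -u ≤ (0:ℝ)),
      max_eq_left (by linarith : (0:ℝ) ≤ u - s), max_eq_right (by linarith : -(u-s) ≤ (0:ℝ))]
    nlinarith [mul_nonneg (sub_nonneg.2 h1) hs, mul_nonneg (sub_nonneg.2 h2) hs]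

section Integr
variable {Ω : Type*} [MeasurableSpace Ω] {μ : Measure Ω} [IsProbabilityMeasure μ]

lemma integrable_pos_sq {Z : Ω → ℝ} (hZ : MemLp Z 2 μ) (y : ℝ) :
    Integrable (fun ω => (max (Z ω - y) 0)^2) μ :=
  ((hZ.sub (memLp_const y)).pos_part).integrable_sq

lemma integrable_neg_sq {Z : Ω → ℝ} (hZ : MemLp Z 2 μ) (y : ℝ) :
    Integrable (fun ω => (max (y - Z ω) 0)^2) μ :=
  (((memLp_const y).sub hZ).pos_part).integrable_sq

lemma integrable_ddE {Z : Ω → ℝ} (hZ : MemLp Z 2 μ) {γ : ℝ} (y : ℝ) :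
    Integrable (fun ω => ddE γ (Z ω - y)) μ := by
  have h2 : MemLp (fun ω => Z ω - y) 2 μ := hZ.sub (memLp_const y)
  have hp : Integrable (fun ω => max (Z ω - y) 0) μ :=
    h2.pos_part.integrable (by norm_num)
  have hn : Integrable (fun ω => max (-(Z ω - y)) 0) μ :=
    h2.neg_part.integrable (by norm_num)
  simpa [ddE, Pi.sub_def] using (hp.const_mul (2*γ)).sub (hn.const_mul (2*(1-γ)))

variable {Ω : Type*} [MeasurableSpace Ω]

lemma expectile_foc (μ : Measure Ω) [IsProbabilityMeasure μ]
    {γ : ℝ} (hγ0 : 0 < γ) (hγ1 : γ < 1) {X : Ω → ℝ} (hX : MemLp X 2 μ) {e : ℝ}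
    (hmin : ∀ y, phi μ γ X e ≤ phi μ γ X y) :
    ∫ ω, ddE γ (X ω - e) ∂μ = 0 := by
  set G := ∫ ω, ddE γ (X ω - e) ∂μ with hG
  have hDe : Integrable (fun ω => ddE γ (X ω - e)) μ := integrable_ddE hX e
  have hIy : ∀ y : ℝ, Integrable
      (fun ω => γ*(max (X ω - y) 0)^2 + (1-γ)*(max (y - X ω) 0)^2) μ :=
    fun y => ((integrable_pos_sq hX y).const_mul γ).add ((integrable_neg_sq hX y).const_mul (1-γ))
  have hphi : ∀ y : ℝ, ∫ ω, (γ*(max (X ω - y) 0)^2 + (1-γ)*(max (y - X ω) 0)^2) ∂μ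
      = phi μ γ X y := by
    intro y
    rw [phi, integral_add ((integrable_pos_sq hX y).const_mul γ)
      ((integrable_neg_sq hX y).const_mul (1-γ)), integral_const_mul, integral_const_mul]
  have key : ∀ t : ℝ, t * G ≤ t^2 := by
    intro t
    have hpt : ∀ ω, |(γ*(max (X ω - (e+t)) 0)^2 + (1-γ)*(max ((e+t) - X ω) 0)^2)
        - (γ*(max (X ω - e) 0)^2 + (1-γ)*(max (e - X ω) 0)^2)
        + t * ddE γ (X ω - e)| ≤ t^2 := by
      intro ω
      have h := ddE_taylor (γ := γ) t (X ω - e) hγ0.le hγ1.le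
      have e1 : X ω - e - t = X ω - (e+t) := by ring
      have e2 : t - (X ω - e) = (e+t) - X ω := by ring
      have e3 : -(X ω - e) = e - X ω := by ring
      rw [e1, e2, e3] at h
      exact h
    have hsplit : ∫ ω, ((γ*(max (X ω - (e+t)) 0)^2 + (1-γ)*(max ((e+t) - X ω) 0)^2)
          - (γ*(max (X ω - e) 0)^2 + (1-γ)*(max (e - X ω) 0)^2)
          + t * ddE γ (X ω - e)) ∂μ
        = phi μ γ X (e+t) - phi μ γ X e + t * G := by
      have hsub : Integrable (fun ω => (γ*(max (X ω - (e+t)) 0)^2 + (1-γ)*(max ((e+t) - X ω) 0)^2)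
          - (γ*(max (X ω - e) 0)^2 + (1-γ)*(max (e - X ω) 0)^2)) μ := (hIy (e+t)).sub (hIy e)
      have hmul : Integrable (fun ω => t * ddE γ (X ω - e)) μ := hDe.const_mul t
      rw [integral_add hsub hmul, integral_sub (hIy (e+t)) (hIy e), integral_const_mul, hphi, hphi]
    have hb : |phi μ γ X (e+t) - phi μ γ X e + t * G| ≤ t^2 := by
      rw [← hsplit, ← Real.norm_eq_abs]
      calc ‖∫ ω, ((γ*(max (X ω - (e+t)) 0)^2 + (1-γ)*(max ((e+t) - X ω) 0)^2)
          - (γ*(max (X ω - e) 0)^2 + (1-γ)*(max (e - X ω) 0)^2)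
          + t * ddE γ (X ω - e)) ∂μ‖ ≤ t^2 * (μ Set.univ).toReal :=
            norm_integral_le_of_norm_le_const
              (Filter.Eventually.of_forall fun ω => by
                rw [Real.norm_eq_abs]; exact hpt ω)
        _ = t^2 := by simp
    have h0 : 0 ≤ phi μ γ X (e+t) - phi μ γ X e := sub_nonneg.2 (hmin (e+t))
    have := (abs_le.1 hb).2
    linarith
  have h2 := key (G/2)
  have hsq : G^2 ≤ 0 := by nlinarith
  have : G^2 = 0 := le_antisymm hsq (sq_nonneg G)
  exact sq_eq_zero_iff.1 (by simpa [sq] using this)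

lemma G_strict_lt (μ : Measure Ω) [IsProbabilityMeasure μ]
    {γ : ℝ} (hγ0 : 0 < γ) (hγ1 : γ < 1) {Z : Ω → ℝ} (hZ : MemLp Z 2 μ)
    {y y' : ℝ} (h : y < y') :
    ∫ ω, ddE γ (Z ω - y') ∂μ < ∫ ω, ddE γ (Z ω - y) ∂μ := by
  set c := 2 * min γ (1-γ) * (y' - y) with hc
  have hm : 0 < min γ (1-γ) := lt_min hγ0 (by linarith)
  have hcpos : 0 < c := by
    have := sub_pos.2 h
    positivity
  have hpt : ∀ ω, ddE γ (Z ω - y') + c ≤ ddE γ (Z ω - y) := by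
    intro ω
    have h1 := ddE_anti hγ0 hγ1 (le_of_lt (sub_pos.2 h)) (Z ω - y)
    have e1 : Z ω - y - (y' - y) = Z ω - y' := by ring
    rwa [e1] at h1
  have hint : ∫ ω, (ddE γ (Z ω - y') + c) ∂μ ≤ ∫ ω, ddE γ (Z ω - y) ∂μ :=
    integral_mono ((integrable_ddE hZ y').add (integrable_const c))
      (integrable_ddE hZ y) hpt
  rw [integral_add (integrable_ddE hZ y') (integrable_const c), integral_const] at hint
  simp only [measure_univ, probReal_univ, ENNReal.toReal_one, smul_eq_mul, one_mul] at hint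
  linarith

end Integr

lemma ddE_add_le {γ : ℝ} (hγ : 1/2 ≤ γ) (a b : ℝ) :
    ddE γ (a + b) ≤ ddE γ a + ddE γ b := by
  rw [ddE_eq, ddE_eq, ddE_eq]
  have h : max (-(a+b)) 0 ≤ max (-a) 0 + max (-b) 0 := by
    have h1 := le_max_left (-a) 0
    have h2 := le_max_left (-b) 0
    have h3 := le_max_right (-a) 0
    have h4 := le_max_right (-b) 0
    exact max_le (by linarith) (by linarith)
  nlinarith [mul_nonneg (by linarith : (0:ℝ) ≤ 4*γ-2) (sub_nonneg.2 h)]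

lemma ddE_add_ge {γ : ℝ} (hγ : γ ≤ 1/2) (a b : ℝ) :
    ddE γ a + ddE γ b ≤ ddE γ (a + b) := by
  rw [ddE_eq, ddE_eq, ddE_eq]
  have h : max (-(a+b)) 0 ≤ max (-a) 0 + max (-b) 0 := by
    have h1 := le_max_left (-a) 0
    have h2 := le_max_left (-b) 0
    have h3 := le_max_right (-a) 0
    have h4 := le_max_right (-b) 0
    exact max_le (by linarith) (by linarith)
  nlinarith [mul_nonneg (by linarith : (0:ℝ) ≤ 2-4*γ) (sub_nonneg.2 h)]

theorem expectile_subadditive_superadditive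
    {Ω : Type*} [MeasurableSpace Ω] (μ : Measure Ω) [IsProbabilityMeasure μ]
    (X Y : Ω → ℝ) (hX : MemLp X 2 μ) (hY : MemLp Y 2 μ)
    (γ : ℝ) (hγ : γ ∈ Set.Ioo (0:ℝ) 1)
    (eX eY eXY : ℝ) (heX : IsExpectile μ γ X eX) (heY : IsExpectile μ γ Y eY)
    (heXY : IsExpectile μ γ (fun ω => X ω + Y ω) eXY) :
    (1/2 ≤ γ → eXY ≤ eX + eY) ∧ (γ ≤ 1/2 → eX + eY ≤ eXY) := by
  obtain ⟨hγ0, hγ1⟩ := hγ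
  set Z : Ω → ℝ := fun ω => X ω + Y ω with hZdef
  have hZ : MemLp Z 2 μ := hX.add hY
  have hGX := expectile_foc μ hγ0 hγ1 hX heX.1
  have hGY := expectile_foc μ hγ0 hγ1 hY heY.1
  have hGXY := expectile_foc μ hγ0 hγ1 hZ heXY.1
  have hintXY : Integrable (fun ω => ddE γ (Z ω - (eX + eY))) μ := integrable_ddE hZ (eX+eY)
  have hintX : Integrable (fun ω => ddE γ (X ω - eX)) μ := integrable_ddE hX eX
  have hintY : Integrable (fun ω => ddE γ (Y ω - eY)) μ := integrable_ddE hY eY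
  constructor
  · intro hhalf
    have hpt : ∀ ω, ddE γ (Z ω - (eX + eY)) ≤ ddE γ (X ω - eX) + ddE γ (Y ω - eY) := by
      intro ω
      have h := ddE_add_le hhalf (X ω - eX) (Y ω - eY)
      have e1 : X ω - eX + (Y ω - eY) = Z ω - (eX + eY) := by simp only [hZdef]; ring
      rwa [e1] at h
    have hint : ∫ ω, ddE γ (Z ω - (eX + eY)) ∂μ
        ≤ ∫ ω, (ddE γ (X ω - eX) + ddE γ (Y ω - eY)) ∂μ :=
      integral_mono hintXY (hintX.add hintY) hpt
    rw [integral_add hintX hintY, hGX, hGY] at hint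
    by_contra hlt
    push_neg at hlt
    have hstrict := G_strict_lt μ hγ0 hγ1 hZ hlt
    rw [hGXY] at hstrict
    linarith
  · intro hhalf
    have hpt : ∀ ω, ddE γ (X ω - eX) + ddE γ (Y ω - eY) ≤ ddE γ (Z ω - (eX + eY)) := by
      intro ω
      have h := ddE_add_ge hhalf (X ω - eX) (Y ω - eY)
      have e1 : X ω - eX + (Y ω - eY) = Z ω - (eX + eY) := by simp only [hZdef]; ring
      rwa [e1] at h
    have hint : ∫ ω, (ddE γ (X ω - eX) + ddE γ (Y ω - eY)) ∂μ
        ≤ ∫ ω, ddE γ (Z ω - (eX + eY)) ∂μ :=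
      integral_mono (hintX.add hintY) hintXY hpt
    rw [integral_add hintX hintY, hGX, hGY] at hint
    by_contra hlt
    push_neg at hlt
    have hstrict := G_strict_lt μ hγ0 hγ1 hZ hlt
    rw [hGXY] at hstrict
    linarith
end

section
/- Monotonicity of expectiles under first-order stochastic dominance: if X ≤_st Y (i.e. E[u(X)] ≤ E[u(Y)] for every bounded increasing u: ℝ → ℝ), then e_γ(X) ≤ e_γ(Y) for every γ ∈ (0,1). -/
open MeasureTheory ProbabilityTheory Real Set

section Aux

/-- A nonempty open upper set in ℝ not containing `0` is an open ray. -/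
lemma upper_open_ray {S : Set ℝ} (hS : IsOpen S)
    (hup : ∀ ⦃a b : ℝ⦄, a ∈ S → a ≤ b → b ∈ S)
    (hne : S.Nonempty) (h0 : (0:ℝ) ∉ S) : ∃ s : ℝ, S = Set.Ioi s := by
  have hbdd : BddBelow S := ⟨0, fun x hx => by
    by_contra hlt
    push_neg at hlt
    exact h0 (hup hx hlt.le)⟩
  refine ⟨sInf S, ?_⟩
  ext x
  simp only [Set.mem_Ioi]
  constructor
  · intro hx
    rcases lt_or_eq_of_le (csInf_le hbdd hx) with h | h
    · exact h
    · exfalso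
      rcases Metric.isOpen_iff.1 hS x hx with ⟨ε, hε, hball⟩
      have hmem : x - ε / 2 ∈ S := by
        apply hball
        have : x - ε / 2 - x = -(ε / 2) := by ring
        rw [Metric.mem_ball, Real.dist_eq, this, abs_neg, abs_of_pos (by linarith)]
        linarith
      have := csInf_le hbdd hmem
      rw [← h] at this
      linarith
  · intro hx
    obtain ⟨a, haS, hax⟩ := exists_lt_of_csInf_lt hne hx
    exact hup haS hax.le

/-- A nonempty closed lower set in ℝ not containing `0` is a closed ray. -/
lemma lower_closed_ray {S : Set ℝ} (hS : IsClosed S)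
    (hlo : ∀ ⦃a b : ℝ⦄, a ∈ S → b ≤ a → b ∈ S)
    (hne : S.Nonempty) (h0 : (0:ℝ) ∉ S) : ∃ s : ℝ, S = Set.Iic s := by
  have hbdd : BddAbove S := ⟨0, fun x hx => by
    by_contra hlt
    push_neg at hlt
    exact h0 (hlo hx hlt.le)⟩
  refine ⟨sSup S, ?_⟩
  ext x
  simp only [Set.mem_Iic]
  constructor
  · exact fun hx => le_csSup hbdd hx
  · intro hx
    rcases eq_or_lt_of_le hx with h | h
    · exact h ▸ hS.csSup_mem hne hbdd
    · obtain ⟨a, haS, hax⟩ := exists_lt_of_lt_csSup hne h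
      exact hlo haS hax.le

/-- Monotone expectations under first-order stochastic dominance, for monotone
continuous integrable test functions. -/
lemma integral_mono_of_st {Ω : Type*} [MeasurableSpace Ω] (μ : Measure Ω)
    [IsProbabilityMeasure μ] {X Y : Ω → ℝ}
    (hXm : AEMeasurable X μ) (hYm : AEMeasurable Y μ)
    (hst : ∀ t : ℝ, μ {ω | t < X ω} ≤ μ {ω | t < Y ω})
    {g : ℝ → ℝ} (hg : Monotone g) (hgc : Continuous g)
    (hiX : Integrable (fun ω => g (X ω)) μ) (hiY : Integrable (fun ω => g (Y ω)) μ) :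
    ∫ ω, g (X ω) ∂μ ≤ ∫ ω, g (Y ω) ∂μ := by
  set c := g 0 with hc
  have hposX : Integrable (fun ω => max (g (X ω) - c) 0) μ :=
    (hiX.sub (integrable_const c)).pos_part
  have hposY : Integrable (fun ω => max (g (Y ω) - c) 0) μ :=
    (hiY.sub (integrable_const c)).pos_part
  have hnegX : Integrable (fun ω => max (c - g (X ω)) 0) μ :=
    ((integrable_const c).sub hiX).pos_part
  have hnegY : Integrable (fun ω => max (c - g (Y ω)) 0) μ :=
    ((integrable_const c).sub hiY).pos_part
  have decomp : ∀ Z : Ω → ℝ, Integrable (fun ω => g (Z ω)) μ →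
      ∫ ω, g (Z ω) ∂μ
        = c + (∫ ω, max (g (Z ω) - c) 0 ∂μ - ∫ ω, max (c - g (Z ω)) 0 ∂μ) := by
    intro Z hiZ
    have hp : Integrable (fun ω => max (g (Z ω) - c) 0) μ :=
      (hiZ.sub (integrable_const c)).pos_part
    have hn : Integrable (fun ω => max (c - g (Z ω)) 0) μ :=
      ((integrable_const c).sub hiZ).pos_part
    have hfun : (fun ω => g (Z ω))
        = fun ω => c + (max (g (Z ω) - c) 0 - max (c - g (Z ω)) 0) := by
      funext ω
      rcases le_total (g (Z ω)) c with h | h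
      · rw [max_eq_right (by linarith), max_eq_left (by linarith)]; ring
      · rw [max_eq_left (by linarith), max_eq_right (by linarith)]; ring
    rw [hfun]
    rw [integral_add (integrable_const c)
        (show Integrable (fun ω => max (g (Z ω) - c) 0 - max (c - g (Z ω)) 0) μ from hp.sub hn),
      integral_sub hp hn, integral_const]
    simp
  have key1 : ∫ ω, max (g (X ω) - c) 0 ∂μ ≤ ∫ ω, max (g (Y ω) - c) 0 ∂μ := by
    have hXnn : 0 ≤ᵐ[μ] fun ω => max (g (X ω) - c) 0 :=
      Filter.Eventually.of_forall fun ω => le_max_right _ _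
    have hYnn : 0 ≤ᵐ[μ] fun ω => max (g (Y ω) - c) 0 :=
      Filter.Eventually.of_forall fun ω => le_max_right _ _
    have hXmble : AEMeasurable (fun ω => max (g (X ω) - c) 0) μ :=
      ((hgc.measurable.comp_aemeasurable hXm).sub aemeasurable_const).max aemeasurable_const
    have hYmble : AEMeasurable (fun ω => max (g (Y ω) - c) 0) μ :=
      ((hgc.measurable.comp_aemeasurable hYm).sub aemeasurable_const).max aemeasurable_const
    have lin : (∫⁻ ω, ENNReal.ofReal (max (g (X ω) - c) 0) ∂μ)
        ≤ ∫⁻ ω, ENNReal.ofReal (max (g (Y ω) - c) 0) ∂μ := by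
      rw [lintegral_eq_lintegral_meas_lt μ hXnn hXmble,
        lintegral_eq_lintegral_meas_lt μ hYnn hYmble]
      refine lintegral_mono_ae ?_
      filter_upwards [ae_restrict_mem measurableSet_Ioi] with t ht
      have ht0 : (0:ℝ) < t := ht
      have hset : ∀ Z : Ω → ℝ, {ω | t < max (g (Z ω) - c) 0} = Z ⁻¹' {x | c + t < g x} := by
        intro Z
        ext ω
        simp only [Set.mem_setOf_eq, Set.mem_preimage, lt_max_iff]
        constructor
        · rintro (h | h)
          · linarith
          · linarith
        · intro h; left; linarith
      rw [hset X, hset Y]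
      rcases ({x : ℝ | c + t < g x}).eq_empty_or_nonempty with hE | hNE
      · simp [hE]
      · obtain ⟨s, hs⟩ := upper_open_ray (isOpen_lt continuous_const hgc)
          (fun a b ha hab => lt_of_lt_of_le ha (hg hab)) hNE
          (by simp only [Set.mem_setOf_eq, ← hc]; linarith)
        rw [hs]
        exact hst s
    rw [integral_eq_lintegral_of_nonneg_ae hXnn hposX.aestronglyMeasurable,
      integral_eq_lintegral_of_nonneg_ae hYnn hposY.aestronglyMeasurable]
    exact ENNReal.toReal_mono (Integrable.lintegral_lt_top hposY).ne lin
  have key2 : ∫ ω, max (c - g (Y ω)) 0 ∂μ ≤ ∫ ω, max (c - g (X ω)) 0 ∂μ := by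
    have hXnn : 0 ≤ᵐ[μ] fun ω => max (c - g (X ω)) 0 :=
      Filter.Eventually.of_forall fun ω => le_max_right _ _
    have hYnn : 0 ≤ᵐ[μ] fun ω => max (c - g (Y ω)) 0 :=
      Filter.Eventually.of_forall fun ω => le_max_right _ _
    have hXmble : AEMeasurable (fun ω => max (c - g (X ω)) 0) μ :=
      ((aemeasurable_const.sub (hgc.measurable.comp_aemeasurable hXm)).max aemeasurable_const)
    have hYmble : AEMeasurable (fun ω => max (c - g (Y ω)) 0) μ :=
      ((aemeasurable_const.sub (hgc.measurable.comp_aemeasurable hYm)).max aemeasurable_const)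
    have lin : (∫⁻ ω, ENNReal.ofReal (max (c - g (Y ω)) 0) ∂μ)
        ≤ ∫⁻ ω, ENNReal.ofReal (max (c - g (X ω)) 0) ∂μ := by
      rw [lintegral_eq_lintegral_meas_le μ hXnn hXmble,
        lintegral_eq_lintegral_meas_le μ hYnn hYmble]
      refine lintegral_mono_ae ?_
      filter_upwards [ae_restrict_mem measurableSet_Ioi] with t ht
      have ht0 : (0:ℝ) < t := ht
      have hset : ∀ Z : Ω → ℝ, {ω | t ≤ max (c - g (Z ω)) 0} = Z ⁻¹' {x | g x ≤ c - t} := by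
        intro Z
        ext ω
        simp only [Set.mem_setOf_eq, Set.mem_preimage, le_max_iff]
        constructor
        · rintro (h | h)
          · linarith
          · linarith
        · intro h; left; linarith
      rw [hset X, hset Y]
      rcases ({x : ℝ | g x ≤ c - t}).eq_empty_or_nonempty with hE | hNE
      · simp [hE]
      · obtain ⟨s, hs⟩ := lower_closed_ray (isClosed_le hgc continuous_const)
          (fun a b ha hab => le_trans (hg hab) ha) hNE
          (by simp only [Set.mem_setOf_eq, ← hc]; linarith)
        rw [hs]
        have hcompl : ∀ Z : Ω → ℝ, AEMeasurable Z μ →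
            μ (Z ⁻¹' Set.Iic s) = 1 - μ {ω | s < Z ω} := by
          intro Z hZ
          have hZc : Z ⁻¹' Set.Iic s = {ω | s < Z ω}ᶜ := by
            ext ω; simp [not_lt]
          rw [hZc, prob_compl_eq_one_sub₀ (nullMeasurableSet_lt aemeasurable_const hZ)]
        rw [hcompl X hXm, hcompl Y hYm]
        exact tsub_le_tsub_left (hst s) 1
    rw [integral_eq_lintegral_of_nonneg_ae hXnn hnegX.aestronglyMeasurable,
      integral_eq_lintegral_of_nonneg_ae hYnn hnegY.aestronglyMeasurable]
    exact ENNReal.toReal_mono (Integrable.lintegral_lt_top hnegX).ne lin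
  rw [decomp X hiX, decomp Y hiY]
  linarith

set_option maxHeartbeats 1000000 in
lemma psi_mono_aux {x1 x2 y1 y2 : ℝ} (hx : x1 ≤ x2) (hy : y1 ≤ y2) :
    (max (x1 - y1) 0) ^ 2 - (max (x1 - y2) 0) ^ 2
      ≤ (max (x2 - y1) 0) ^ 2 - (max (x2 - y2) 0) ^ 2 := by
  simp only [max_def]
  split_ifs <;> nlinarith [sq_nonneg (x2 - x1), sq_nonneg (y2 - y1)]

/-- The asymmetric-loss increments are monotone in `x` when `y1 ≤ y2`. -/
lemma psi_mono {γ : ℝ} (hγ0 : 0 < γ) (hγ1 : γ < 1) {x1 x2 y1 y2 : ℝ}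
    (hx : x1 ≤ x2) (hy : y1 ≤ y2) :
    γ * (max (x1 - y1) 0) ^ 2 + (1 - γ) * (max (y1 - x1) 0) ^ 2
      - (γ * (max (x1 - y2) 0) ^ 2 + (1 - γ) * (max (y2 - x1) 0) ^ 2)
    ≤ γ * (max (x2 - y1) 0) ^ 2 + (1 - γ) * (max (y1 - x2) 0) ^ 2
      - (γ * (max (x2 - y2) 0) ^ 2 + (1 - γ) * (max (y2 - x2) 0) ^ 2) := by
  have h1γ : (0:ℝ) ≤ 1 - γ := by linarith
  have hA : (max (x1 - y1) 0) ^ 2 - (max (x1 - y2) 0) ^ 2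
      ≤ (max (x2 - y1) 0) ^ 2 - (max (x2 - y2) 0) ^ 2 := psi_mono_aux hx hy
  have hB : (max (y2 - x2) 0) ^ 2 - (max (y1 - x2) 0) ^ 2
      ≤ (max (y2 - x1) 0) ^ 2 - (max (y1 - x1) 0) ^ 2 := by
    have := psi_mono_aux (neg_le_neg hx) (neg_le_neg hy)
    simpa [show ∀ a b : ℝ, -a - -b = b - a from fun a b => by ring] using this
  nlinarith [mul_le_mul_of_nonneg_left hA hγ0.le, mul_le_mul_of_nonneg_left hB h1γ]

lemma integrable_max_sq_left {Ω : Type*} [MeasurableSpace Ω] {μ : Measure Ω}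
    [IsProbabilityMeasure μ] {X : Ω → ℝ} (hX : MemLp X 2 μ) (y : ℝ) :
    Integrable (fun ω => (max (X ω - y) 0) ^ 2) μ := by
  have h1 : MemLp (fun ω => X ω - y) 2 μ := hX.sub (memLp_const y)
  have h2 : Integrable (fun ω => (X ω - y) ^ 2) μ := h1.integrable_sq
  refine h2.mono ?_ (Filter.Eventually.of_forall fun ω => ?_)
  · exact (((hX.aestronglyMeasurable.aemeasurable.sub aemeasurable_const).max
      aemeasurable_const).pow_const 2).aestronglyMeasurable
  · rw [Real.norm_eq_abs, Real.norm_eq_abs, abs_of_nonneg (by positivity),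
      abs_of_nonneg (sq_nonneg _)]
    rcases le_total (X ω - y) 0 with h | h
    · rw [max_eq_right h]; simpa using sq_nonneg (X ω - y)
    · rw [max_eq_left h]

lemma integrable_max_sq_right {Ω : Type*} [MeasurableSpace Ω] {μ : Measure Ω}
    [IsProbabilityMeasure μ] {X : Ω → ℝ} (hX : MemLp X 2 μ) (y : ℝ) :
    Integrable (fun ω => (max (y - X ω) 0) ^ 2) μ := by
  have h1 : MemLp (fun ω => y - X ω) 2 μ := (memLp_const y).sub hX
  have h2 : Integrable (fun ω => (y - X ω) ^ 2) μ := h1.integrable_sq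
  refine h2.mono ?_ (Filter.Eventually.of_forall fun ω => ?_)
  · exact (((aemeasurable_const.sub hX.aestronglyMeasurable.aemeasurable).max
      aemeasurable_const).pow_const 2).aestronglyMeasurable
  · rw [Real.norm_eq_abs, Real.norm_eq_abs, abs_of_nonneg (by positivity),
      abs_of_nonneg (sq_nonneg _)]
    rcases le_total (y - X ω) 0 with h | h
    · rw [max_eq_right h]; simpa using sq_nonneg (y - X ω)
    · rw [max_eq_left h]

/-- The difference of the expectile objective at two points as a single integral. -/
lemma phi_diff {Ω : Type*} [MeasurableSpace Ω] (μ : Measure Ω)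
    [IsProbabilityMeasure μ] {X : Ω → ℝ} (hX : MemLp X 2 μ) (γ y1 y2 : ℝ) :
    phi μ γ X y1 - phi μ γ X y2
      = ∫ ω, (γ * (max (X ω - y1) 0) ^ 2 + (1 - γ) * (max (y1 - X ω) 0) ^ 2
          - (γ * (max (X ω - y2) 0) ^ 2 + (1 - γ) * (max (y2 - X ω) 0) ^ 2)) ∂μ := by
  have hA1 := (integrable_max_sq_left hX y1).const_mul γ
  have hB1 := (integrable_max_sq_right hX y1).const_mul (1 - γ)
  have hA2 := (integrable_max_sq_left hX y2).const_mul γ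
  have hB2 := (integrable_max_sq_right hX y2).const_mul (1 - γ)
  rw [integral_sub
      (show Integrable (fun ω => γ * (max (X ω - y1) 0) ^ 2
        + (1 - γ) * (max (y1 - X ω) 0) ^ 2) μ from hA1.add hB1)
      (show Integrable (fun ω => γ * (max (X ω - y2) 0) ^ 2
        + (1 - γ) * (max (y2 - X ω) 0) ^ 2) μ from hA2.add hB2),
    integral_add hA1 hB1, integral_add hA2 hB2,
    integral_const_mul, integral_const_mul, integral_const_mul, integral_const_mul]
  rfl

end Aux

theorem expectile_monotone_of_stochastic_dominance
    {Ω : Type*} [MeasurableSpace Ω] (μ : Measure Ω) [IsProbabilityMeasure μ]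
    (X Y : Ω → ℝ) (hX : MemLp X 2 μ) (hY : MemLp Y 2 μ)
    (hst : ∀ t : ℝ, μ {ω | t < X ω} ≤ μ {ω | t < Y ω})
    (γ : ℝ) (hγ : γ ∈ Set.Ioo (0:ℝ) 1)
    (eX eY : ℝ) (heX : IsExpectile μ γ X eX) (heY : IsExpectile μ γ Y eY) :
    eX ≤ eY := by
  obtain ⟨hγ0, hγ1⟩ := hγ
  by_contra hcon
  push_neg at hcon
  -- the test function
  set g : ℝ → ℝ := fun x =>
    γ * (max (x - eY) 0) ^ 2 + (1 - γ) * (max (eY - x) 0) ^ 2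
      - (γ * (max (x - eX) 0) ^ 2 + (1 - γ) * (max (eX - x) 0) ^ 2) with hgdef
  have hgmono : Monotone g := fun a b hab => psi_mono hγ0 hγ1 hab hcon.le
  have hgcont : Continuous g := by
    simp only [hgdef]
    fun_prop
  have hint : ∀ (Z : Ω → ℝ), MemLp Z 2 μ → Integrable (fun ω => g (Z ω)) μ := by
    intro Z hZ
    exact (((integrable_max_sq_left hZ eY).const_mul γ).add
      ((integrable_max_sq_right hZ eY).const_mul (1 - γ))).sub
      (((integrable_max_sq_left hZ eX).const_mul γ).add
        ((integrable_max_sq_right hZ eX).const_mul (1 - γ)))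
  have key := integral_mono_of_st μ hX.aestronglyMeasurable.aemeasurable
    hY.aestronglyMeasurable.aemeasurable hst hgmono hgcont (hint X hX) (hint Y hY)
  rw [← phi_diff μ hX γ eY eX, ← phi_diff μ hY γ eY eX] at key
  have h1 : phi μ γ X eX ≤ phi μ γ X eY := heX.1 eY
  have h2 : phi μ γ Y eX ≤ phi μ γ Y eY := by linarith
  have h3 : ∀ z, phi μ γ Y eX ≤ phi μ γ Y z := fun z => le_trans h2 (heY.1 z)
  have h4 : eX = eY := heY.2 eX h3
  exact absurd h4 hcon.ne'
end
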